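/- Let X be the quotient of R̃ × S¹ by the equivalence relation generated by (u, z) ∼ (−u, z) and (u, z) ∼ (σ(u), −z), where σ(u) = (−u₁, −u₂, −u₃, −u₄, u₅, u₆, u₇, u₈), equipped with the quotient topology. Then the assignment [(u, z)] ↦ z² is a well-defined continuous map X → S¹ which is a locally trivial fiber bundle whose fiber is homeomorphic to R, the quotient of R̃ by the antipodal map u ↦ −u. -/

import Mathlib

/-- `R̃ ⊂ ℝ⁸`: the set of `u` with `u₁² + ⋯ + u₈² = 1` and
`u₁² + u₂² + u₃² + u₄² = u₅² + u₆² + u₇² + u₈²`, with the subspace topology. -/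
def Rtilde : Set (EuclideanSpace ℝ (Fin 8)) :=
  {u | u 0 ^ 2 + u 1 ^ 2 + u 2 ^ 2 + u 3 ^ 2 + u 4 ^ 2 + u 5 ^ 2 + u 6 ^ 2 + u 7 ^ 2 = 1 ∧
       u 0 ^ 2 + u 1 ^ 2 + u 2 ^ 2 + u 3 ^ 2 = u 4 ^ 2 + u 5 ^ 2 + u 6 ^ 2 + u 7 ^ 2}

/-- The involution `σ(u) = (−u₁, −u₂, −u₃, −u₄, u₅, u₆, u₇, u₈)` of `ℝ⁸`. -/
def sigmaInv (u : EuclideanSpace ℝ (Fin 8)) : EuclideanSpace ℝ (Fin 8) :=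
  WithLp.toLp 2 (fun j : Fin 8 => if (j : ℕ) < 4 then -u j else u j)

/-- The unit circle in `ℂ`. -/
abbrev Circle1 : Type := Metric.sphere (0 : ℂ) 1

/-- The relations `(u, z) ∼ (−u, z)` and `(u, z) ∼ (σ(u), −z)` on `R̃ × S¹`. -/
def cobRel (p q : Rtilde × Circle1) : Prop :=
  ((q.1 : EuclideanSpace ℝ (Fin 8)) = -(p.1 : EuclideanSpace ℝ (Fin 8)) ∧ q.2 = p.2) ∨
  ((q.1 : EuclideanSpace ℝ (Fin 8)) = sigmaInv (p.1 : EuclideanSpace ℝ (Fin 8)) ∧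
    (q.2 : ℂ) = -(p.2 : ℂ))

/-- The quotient `X = (R̃ × S¹)/∼`, with the quotient topology. -/
def Xquot : Type := Quot cobRel

noncomputable instance : TopologicalSpace Xquot := by unfold Xquot; infer_instance

/-- `R`: the quotient of `R̃` by the antipodal map, with the quotient topology. -/
def Rquot : Type := Quot (fun u v : Rtilde =>
  (v : EuclideanSpace ℝ (Fin 8)) = -(u : EuclideanSpace ℝ (Fin 8)))

noncomputable instance : TopologicalSpace Rquot := by unfold Rquot; infer_instance

/-- The square of an element of the unit circle. -/
noncomputable def circleSq (z : Circle1) : Circle1 :=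
  ⟨(z : ℂ) ^ 2, by
    have hz : ‖(z : ℂ)‖ = 1 := mem_sphere_zero_iff_norm.mp z.2
    simp [mem_sphere_zero_iff_norm, norm_pow, hz]⟩

noncomputable section

local notation "E8" => EuclideanSpace ℝ (Fin 8)

/-! ### Basic lemmas about `sigmaInv` and `Rtilde` -/

lemma sigmaInv_apply (u : E8) (j : Fin 8) :
    sigmaInv u j = if (j : ℕ) < 4 then -u j else u j := rfl

lemma sigmaInv_sigmaInv (u : E8) : sigmaInv (sigmaInv u) = u := by
  ext j
  simp only [sigmaInv_apply]
  split <;> simp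

lemma sigmaInv_neg (u : E8) : sigmaInv (-u) = -sigmaInv u := by
  ext j
  simp only [sigmaInv_apply, PiLp.neg_apply]
  split <;> simp

lemma continuous_sigmaInv : Continuous sigmaInv := by
  have h : Continuous fun (u : Fin 8 → ℝ) (j : Fin 8) =>
      if (j : ℕ) < 4 then -u j else u j := by
    refine continuous_pi fun j => ?_
    by_cases hj : (j : ℕ) < 4
    · simp only [hj, if_true]; exact (continuous_apply j).neg
    · simpa [hj] using continuous_apply j
  exact (PiLp.continuous_toLp 2 fun _ : Fin 8 => ℝ).comp
    (h.comp (PiLp.continuous_ofLp 2 fun _ : Fin 8 => ℝ))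

lemma neg_mem_Rtilde {u : E8} (hu : u ∈ Rtilde) : -u ∈ Rtilde := by
  obtain ⟨h1, h2⟩ := hu
  constructor <;> simp only [PiLp.neg_apply, neg_sq] <;> assumption

lemma sigmaInv_mem_Rtilde {u : E8} (hu : u ∈ Rtilde) : sigmaInv u ∈ Rtilde := by
  obtain ⟨h1, h2⟩ := hu
  constructor <;> simp only [sigmaInv_apply] <;> norm_num <;> assumption

lemma circle_norm (z : Circle1) : ‖(z : ℂ)‖ = 1 := mem_sphere_zero_iff_norm.mp z.2

lemma circle_ne_zero (z : Circle1) : (z : ℂ) ≠ 0 := by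
  intro h
  have := circle_norm z
  rw [h] at this
  simp at this

/-! ### Complex square roots -/

open Complex

def csqrt (w : ℂ) : ℂ := Complex.exp ((w.arg : ℂ) * Complex.I / 2)

lemma norm_csqrt (w : ℂ) : ‖csqrt w‖ = 1 := by
  rw [csqrt, Complex.norm_exp]
  simp

lemma csqrt_sq {w : ℂ} (hw : ‖w‖ = 1) : csqrt w ^ 2 = w := by
  rw [csqrt, ← Complex.exp_nat_mul]
  have h2 : ((2:ℕ) : ℂ) * ((w.arg : ℂ) * Complex.I / 2) = w.arg * Complex.I := by
    push_cast; ring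
  rw [h2]
  have := Complex.norm_mul_exp_arg_mul_I w
  rw [hw] at this
  simpa using this

lemma continuousAt_csqrt {w : ℂ} (hw : w ∈ Complex.slitPlane) : ContinuousAt csqrt w := by
  unfold csqrt
  exact Complex.continuous_exp.continuousAt.comp <|
    (((Complex.continuous_ofReal.continuousAt.comp (Complex.continuousAt_arg hw)).mul
      continuousAt_const).div_const 2)

lemma sq_eq_sq_complex {a b : ℂ} (h : a ^ 2 = b ^ 2) : a = b ∨ a = -b := by
  have h1 : (a - b) * (a + b) = 0 := by linear_combination h
  rcases mul_eq_zero.mp h1 with h2 | h2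
  · exact Or.inl (sub_eq_zero.mp h2)
  · exact Or.inr (eq_neg_of_add_eq_zero_left h2)

lemma mem_slitPlane_of_norm_one {x : ℂ} (hx : ‖x‖ = 1) (hx1 : x ≠ -1) :
    x ∈ Complex.slitPlane := by
  rw [Complex.mem_slitPlane_iff]
  by_contra h
  push_neg at h
  obtain ⟨h1, h2⟩ := h
  apply hx1
  have hre : x.re ≤ 0 := h1
  have habs : ‖x‖ = 1 := hx
  have : x.re = -1 := by
    have h3 : ‖x‖ = Real.sqrt (x.re * x.re + x.im * x.im) := by
      rw [Complex.norm_def, Complex.normSq_apply]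
    rw [h2, habs] at h3
    have h4 : x.re * x.re + 0 * 0 = 1 := by
      have := Real.sq_sqrt (show (0:ℝ) ≤ x.re * x.re + 0 * 0 by nlinarith)
      rw [← h3] at this; nlinarith [this]
    nlinarith
  apply Complex.ext <;> simp [this, h2]

/-! ### The square root `sCirc b` adapted to the base point `b` -/

def sCirc (b : Circle1) (w : ℂ) : ℂ := csqrt (b : ℂ) * csqrt (w * (b : ℂ)⁻¹)

lemma norm_sCirc (b : Circle1) (w : ℂ) : ‖sCirc b w‖ = 1 := by
  rw [sCirc, norm_mul, norm_csqrt, norm_csqrt, one_mul]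

lemma sCirc_ne_zero (b : Circle1) (w : ℂ) : sCirc b w ≠ 0 := by
  intro h
  have := norm_sCirc b w
  rw [h] at this
  simp at this

lemma sCirc_sq (b : Circle1) {w : ℂ} (hw : ‖w‖ = 1) : sCirc b w ^ 2 = w := by
  have hb : ‖(b : ℂ)‖ = 1 := circle_norm b
  have hbne : (b : ℂ) ≠ 0 := circle_ne_zero b
  have hwb : ‖w * (b : ℂ)⁻¹‖ = 1 := by
    rw [norm_mul, norm_inv, hw, hb]; norm_num
  rw [sCirc, mul_pow, csqrt_sq hb, csqrt_sq hwb]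
  field_simp

lemma continuousAt_sCirc (b : Circle1) {w : ℂ} (hw : ‖w‖ = 1) (hne : w ≠ -(b : ℂ)) :
    ContinuousAt (sCirc b) w := by
  have hb : ‖(b : ℂ)‖ = 1 := circle_norm b
  have hbne : (b : ℂ) ≠ 0 := circle_ne_zero b
  have hwb : ‖w * (b : ℂ)⁻¹‖ = 1 := by
    rw [norm_mul, norm_inv, hw, hb]; norm_num
  have hslit : w * (b : ℂ)⁻¹ ∈ Complex.slitPlane := by
    refine mem_slitPlane_of_norm_one hwb fun h => hne ?_
    field_simp at h
    exact h
  have h2 : ContinuousAt (fun x : ℂ => csqrt (x * (b : ℂ)⁻¹)) w :=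
    ContinuousAt.comp (g := csqrt) (f := fun x : ℂ => x * (b : ℂ)⁻¹) (x := w)
      (continuousAt_csqrt hslit) ((continuous_mul_right _).continuousAt)
  exact continuousAt_const.mul h2


/-- The branch dichotomy: each circle element is `±sCirc b (z^2)`. -/
lemma circle_branch (b : Circle1) (z : Circle1) :
    (z : ℂ) = sCirc b ((z : ℂ) ^ 2) ∨ (z : ℂ) = -sCirc b ((z : ℂ) ^ 2) := by
  have hz2 : ‖(z : ℂ) ^ 2‖ = 1 := by rw [norm_pow, circle_norm]; norm_num
  exact sq_eq_sq_complex (sCirc_sq b hz2).symm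

/-! ### Quotient infrastructure for `Rquot` -/

abbrev rR : Rtilde → Rtilde → Prop := fun u v => (v : E8) = -(u : E8)

def negR (u : Rtilde) : Rtilde := ⟨-(u : E8), neg_mem_Rtilde u.2⟩
def sigR (u : Rtilde) : Rtilde := ⟨sigmaInv (u : E8), sigmaInv_mem_Rtilde u.2⟩

lemma continuous_negR : Continuous negR :=
  (continuous_subtype_val.neg).subtype_mk _

lemma continuous_sigR : Continuous sigR :=
  (continuous_sigmaInv.comp continuous_subtype_val).subtype_mk _

lemma negR_negR (u : Rtilde) : negR (negR u) = u := by
  simp [negR]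

lemma sigR_sigR (u : Rtilde) : sigR (sigR u) = u := by
  simp [sigR, sigmaInv_sigmaInv]

def qR : Rtilde → Rquot := Quot.mk rR

lemma isQuotientMap_qR : Topology.IsQuotientMap qR := isQuotientMap_quot_mk

lemma qR_negR (u : Rtilde) : qR (negR u) = qR u :=
  Quot.sound (show rR (negR u) u by simp [rR, negR])

lemma mkR_eq_iff {u v : Rtilde} : qR u = qR v ↔ (v = u ∨ v = negR u) := by
  have key : ∀ x y : Rtilde, Relation.EqvGen rR x y → (y = x ∨ y = negR x) := by
    intro x y h
    induction h with
    | rel a c hac => exact Or.inr (Subtype.ext hac)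
    | refl a => exact Or.inl rfl
    | symm a c _ ih =>
      rcases ih with h1 | h1
      · exact Or.inl h1.symm
      · right; rw [h1, negR_negR]
    | trans a c d _ _ ih1 ih2 =>
      rcases ih1 with h1 | h1 <;> rcases ih2 with h2 | h2 <;> subst h1 <;> subst h2 <;>
        simp [negR_negR]
  constructor
  · intro h
    exact key _ _ (Quot.eqvGen_exact h)
  · rintro (rfl | rfl)
    · rfl
    · exact (qR_negR u).symm

lemma isOpenMap_qR : IsOpenMap qR := by
  intro W hW
  rw [← isQuotientMap_qR.isOpen_preimage]
  have : qR ⁻¹' (qR '' W) = W ∪ negR ⁻¹' W := by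
    ext x
    simp only [Set.mem_preimage, Set.mem_image, Set.mem_union]
    constructor
    · rintro ⟨w, hw, hqw⟩
      rcases mkR_eq_iff.mp hqw with rfl | h1
      · exact Or.inl hw
      · right; rw [show negR x = w by rw [h1, negR_negR]]; exact hw
    · rintro (hx | hx)
      · exact ⟨x, hx, rfl⟩
      · exact ⟨negR x, hx, qR_negR x⟩
  rw [this]
  exact hW.union (hW.preimage continuous_negR)

lemma isQuotientMap_idProdqR {U : Set Circle1} :
    Topology.IsQuotientMap (Prod.map (id : U → U) qR) :=
  (IsOpenMap.id.prodMap isOpenMap_qR).isQuotientMap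
    (continuous_id.prodMap isQuotientMap_qR.continuous)
    (Function.surjective_id.prodMap isQuotientMap_qR.surjective)

/-! ### The map `fX : Xquot → Circle1` -/

def fX : Xquot → Circle1 :=
  Quot.lift (fun p : Rtilde × Circle1 => circleSq p.2) (by
    rintro p q (⟨-, h2⟩ | ⟨-, h2⟩)
    · show circleSq p.2 = circleSq q.2
      rw [h2]
    · apply Subtype.ext
      show ((p.2 : ℂ)) ^ 2 = ((q.2 : ℂ)) ^ 2
      rw [h2]; ring)

lemma fX_mk (p : Rtilde × Circle1) : fX (Quot.mk cobRel p) = circleSq p.2 := rfl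

lemma isQuotientMap_qX :
    Topology.IsQuotientMap (Quot.mk cobRel : Rtilde × Circle1 → Xquot) :=
  isQuotientMap_quot_mk

lemma continuous_circleSq : Continuous circleSq :=
  (continuous_subtype_val.pow 2).subtype_mk _

lemma continuous_fX : Continuous fX :=
  isQuotientMap_qX.continuous_iff.mpr (continuous_circleSq.comp continuous_snd)

/-! ### The branch function -/

open scoped Classical in
def g2 (b : Circle1) (p : Rtilde × Circle1) : Rquot :=
  if (p.2 : ℂ) = sCirc b ((p.2 : ℂ) ^ 2) then qR p.1 else qR (sigR p.1)

lemma g2_respects (b : Circle1) : ∀ p q, cobRel p q → g2 b p = g2 b q := by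
  classical
  rintro p q (⟨h1, h2⟩ | ⟨h1, h2⟩)
  · -- antipodal case: same circle coordinate
    unfold g2
    rw [h2]
    split
    · exact Quot.sound h1
    · exact Quot.sound (show rR (sigR p.1) (sigR q.1) by
        show sigmaInv (q.1 : E8) = -(sigmaInv (p.1 : E8))
        rw [h1, sigmaInv_neg])
  · -- sigma case: negated circle coordinate
    have hq2sq : ((q.2 : ℂ)) ^ 2 = ((p.2 : ℂ)) ^ 2 := by rw [h2]; ring
    have hs0 : sCirc b ((p.2 : ℂ) ^ 2) ≠ 0 := sCirc_ne_zero b _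
    unfold g2
    by_cases hc : (p.2 : ℂ) = sCirc b ((p.2 : ℂ) ^ 2)
    · have hcq : ¬ ((q.2 : ℂ) = sCirc b ((q.2 : ℂ) ^ 2)) := by
        rw [hq2sq, h2, ← hc]
        intro h
        apply hs0
        rw [← hc]
        linear_combination -h / 2
      rw [if_pos hc, if_neg hcq]
      have : sigR q.1 = p.1 := by
        apply Subtype.ext
        show sigmaInv (q.1 : E8) = (p.1 : E8)
        rw [h1, sigmaInv_sigmaInv]
      rw [this]
    · have hp : (p.2 : ℂ) = -sCirc b ((p.2 : ℂ) ^ 2) :=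
        (circle_branch b p.2).resolve_left hc
      have hcq : (q.2 : ℂ) = sCirc b ((q.2 : ℂ) ^ 2) := by
        rw [hq2sq, h2]
        linear_combination -hp
      rw [if_neg hc, if_pos hcq]
      have : q.1 = sigR p.1 := Subtype.ext h1
      rw [this]



/-! ### A base point of `Rtilde` -/

def u0 : E8 := WithLp.toLp 2 (fun j : Fin 8 => if j = 0 ∨ j = 4 then (Real.sqrt 2)⁻¹ else 0)

lemma u0_mem : u0 ∈ Rtilde := by
  have h2 : ((Real.sqrt 2)⁻¹ : ℝ) ^ 2 = 1 / 2 := by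
    rw [inv_pow, Real.sq_sqrt (by norm_num : (0:ℝ) ≤ 2)]
    norm_num
  constructor <;> simp only [u0, PiLp.toLp_apply, Rtilde, Set.mem_setOf_eq, (by decide : ((0:Fin 8) = 0 ∨ (0:Fin 8) = 4) = True), (by decide : ((1:Fin 8) = 0 ∨ (1:Fin 8) = 4) = False), (by decide : ((2:Fin 8) = 0 ∨ (2:Fin 8) = 4) = False), (by decide : ((3:Fin 8) = 0 ∨ (3:Fin 8) = 4) = False), (by decide : ((4:Fin 8) = 0 ∨ (4:Fin 8) = 4) = True), (by decide : ((5:Fin 8) = 0 ∨ (5:Fin 8) = 4) = False), (by decide : ((6:Fin 8) = 0 ∨ (6:Fin 8) = 4) = False), (by decide : ((7:Fin 8) = 0 ∨ (7:Fin 8) = 4) = False), if_true, if_false] <;> norm_num [h2]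

/-- The assignment `[(u, z)] ↦ z²` is a well-defined continuous map `X → S¹` which is a
locally trivial fiber bundle with fiber `R`: every point of `S¹` has an open
neighborhood `U` with a homeomorphism `f⁻¹(U) ≅ U × R` commuting with the projections
to `U`. -/
theorem Xquot_fiber_bundle_over_circle :
    ∃ f : Xquot → Circle1,
      Continuous f ∧
      (∀ p : Rtilde × Circle1, f (Quot.mk cobRel p) = circleSq p.2) ∧
      Function.Surjective f ∧
      ∀ b : Circle1, ∃ U : Set Circle1, IsOpen U ∧ b ∈ U ∧
        ∃ e : (f ⁻¹' U) ≃ₜ U × Rquot, ∀ x : (f ⁻¹' U), ((e x).1 : Circle1) = f x.1 := by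
  classical
  refine ⟨fX, continuous_fX, fun p => rfl, ?_, ?_⟩
  · -- surjectivity
    intro b
    have hb : ‖(b : ℂ)‖ = 1 := circle_norm b
    refine ⟨Quot.mk cobRel (⟨u0, u0_mem⟩, ⟨csqrt (b : ℂ),
      mem_sphere_zero_iff_norm.mpr (norm_csqrt _)⟩), ?_⟩
    · exact Subtype.ext (csqrt_sq hb)
  · -- local triviality
    intro b
    have hb : ‖(b : ℂ)‖ = 1 := circle_norm b
    have hbne : (b : ℂ) ≠ 0 := circle_ne_zero b
    set U : Set Circle1 := {w : Circle1 | (w : ℂ) ≠ -(b : ℂ)} with hUdef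
    have hUopen : IsOpen U :=
      IsOpen.preimage continuous_subtype_val isOpen_compl_singleton
    have hbU : b ∈ U := fun h => hbne (by linear_combination h / 2)
    refine ⟨U, hUopen, hbU, ?_⟩
    -- the preimage of U upstairs
    have hfpre : IsOpen (fX ⁻¹' U) := hUopen.preimage continuous_fX
    -- the local section of the squaring map
    have hsqnorm : ∀ z : Circle1, ‖(z : ℂ) ^ 2‖ = 1 := fun z => by
      rw [norm_pow, circle_norm]; norm_num
    set sEl : U → Circle1 := fun w =>
      ⟨sCirc b ((w : Circle1) : ℂ), mem_sphere_zero_iff_norm.mpr (norm_sCirc _ _)⟩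
      with hsEldef
    have hsEl_sq : ∀ w : U, ((sEl w : ℂ)) ^ 2 = ((w : Circle1) : ℂ) := fun w =>
      sCirc_sq b (circle_norm (w : Circle1))
    have hsElcont : Continuous sEl := by
      have hg : Continuous fun w : U => sCirc b (((w : Circle1)) : ℂ) := by
        rw [continuous_iff_continuousAt]
        intro w
        exact ContinuousAt.comp (g := sCirc b)
          (continuousAt_sCirc b (circle_norm _) w.2)
          (continuous_subtype_val.comp continuous_subtype_val).continuousAt
      exact hg.subtype_mk _
    -- the forward map
    set G : Xquot → Rquot := Quot.lift (g2 b) (g2_respects b) with hGdef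
    set F : (fX ⁻¹' U) → U × Rquot := fun x => (⟨fX x.1, x.2⟩, G x.1) with hFdef
    have hGcont : Continuous fun x : (fX ⁻¹' U) => G x.1 := by
      refine (isQuotientMap_qX.restrictPreimage_isOpen hfpre).continuous_iff.mpr ?_
      show Continuous fun p : (Quot.mk cobRel ⁻¹' (fX ⁻¹' U)) => g2 b p.1
      have hmemD : ∀ p : (Quot.mk cobRel ⁻¹' (fX ⁻¹' U)),
          ((p.1.2 : ℂ)) ^ 2 ≠ -(b : ℂ) := fun p => p.2
      have hψ : Continuous fun p : (Quot.mk cobRel ⁻¹' (fX ⁻¹' U)) => ((p.1.2 : ℂ)) :=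
        continuous_subtype_val.comp (continuous_snd.comp continuous_subtype_val)
      have hφ : Continuous fun p : (Quot.mk cobRel ⁻¹' (fX ⁻¹' U)) =>
          sCirc b ((p.1.2 : ℂ) ^ 2) := by
        rw [continuous_iff_continuousAt]
        intro p
        exact ContinuousAt.comp (g := sCirc b)
          (continuousAt_sCirc b (hsqnorm _) (hmemD p)) (hψ.pow 2).continuousAt
      set C : Set (Quot.mk cobRel ⁻¹' (fX ⁻¹' U)) :=
        {p | (p.1.2 : ℂ) = sCirc b ((p.1.2 : ℂ) ^ 2)} with hCdef
      have hCclosed : IsClosed C := isClosed_eq hψ hφ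
      have hCcomplClosed : IsClosed Cᶜ := by
        have : Cᶜ = {p | (p.1.2 : ℂ) = -sCirc b ((p.1.2 : ℂ) ^ 2)} := by
          ext p
          simp only [Set.mem_compl_iff, hCdef, Set.mem_setOf_eq]
          constructor
          · intro h
            exact (circle_branch b p.1.2).resolve_left h
          · intro h hc
            apply sCirc_ne_zero b ((p.1.2 : ℂ) ^ 2)
            have := hc.symm.trans h
            linear_combination this / 2
        rw [this]
        exact isClosed_eq hψ hφ.neg
      have hfront : frontier C = ∅ :=
        IsClopen.frontier_eq ⟨hCclosed, isClosed_compl_iff.mp hCcomplClosed⟩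
      show Continuous fun p : (Quot.mk cobRel ⁻¹' (fX ⁻¹' U)) =>
        if (p.1.2 : ℂ) = sCirc b ((p.1.2 : ℂ) ^ 2) then qR p.1.1 else qR (sigR p.1.1)
      refine Continuous.if ?_ ?_ ?_
      · intro a ha
        rw [hfront] at ha
        exact absurd ha (Set.notMem_empty a)
      · exact isQuotientMap_qR.continuous.comp
          (continuous_fst.comp continuous_subtype_val)
      · exact (isQuotientMap_qR.continuous.comp continuous_sigR).comp
          (continuous_fst.comp continuous_subtype_val)
    have hFcont : Continuous F :=
      Continuous.prodMk
        ((continuous_fX.comp continuous_subtype_val).subtype_mk _) hGcont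
    -- the inverse map
    set Finv0 : U × Rquot → Xquot := fun y =>
      Quot.lift (fun u : Rtilde => Quot.mk cobRel (u, sEl y.1))
        (fun u v huv => Quot.sound (Or.inl ⟨huv, rfl⟩)) y.2 with hFinv0def
    have hmem0 : ∀ y : U × Rquot, Finv0 y ∈ fX ⁻¹' U := by
      rintro ⟨w, y2⟩
      induction y2 using Quot.ind with
      | mk u =>
        show fX (Quot.mk cobRel (u, sEl w)) ∈ U
        rw [fX_mk]
        have : circleSq (sEl w) = (w : Circle1) := Subtype.ext (hsEl_sq w)
        rw [this]
        exact w.2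
    set Finv : U × Rquot → (fX ⁻¹' U) := fun y => ⟨Finv0 y, hmem0 y⟩ with hFinvdef
    have hFinvcont : Continuous Finv := by
      rw [isQuotientMap_idProdqR.continuous_iff]
      show Continuous fun y : U × Rtilde =>
        (⟨Quot.mk cobRel (y.2, sEl y.1), hmem0 (y.1, qR y.2)⟩ : (fX ⁻¹' U))
      refine Continuous.subtype_mk ?_ _
      exact (continuous_quot_mk).comp
        (continuous_snd.prodMk (hsElcont.comp continuous_fst))
    -- the two inverse identities
    have hleft : Function.LeftInverse Finv F := by
      intro x
      apply Subtype.ext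
      obtain ⟨p, hp⟩ := Quot.exists_rep x.1
      show Finv0 (F x) = x.1
      have hFx2 : (F x).2 = g2 b p := by
        rw [hFdef]
        show G x.1 = g2 b p
        rw [← hp]
      by_cases hc : (p.2 : ℂ) = sCirc b ((p.2 : ℂ) ^ 2)
      · have h2 : (F x).2 = qR p.1 := by rw [hFx2]; unfold g2; rw [if_pos hc]
        have : Finv0 (F x) = Quot.mk cobRel (p.1, sEl (F x).1) := by
          conv_lhs => rw [show F x = ((F x).1, (F x).2) from rfl, h2]
          rfl
        rw [this, ← hp]
        congr 1
        refine Prod.ext rfl (Subtype.ext ?_)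
        show sCirc b (((F x).1 : Circle1) : ℂ) = (p.2 : ℂ)
        have hval : (((F x).1 : Circle1) : ℂ) = (p.2 : ℂ) ^ 2 := by
          show ((fX x.1 : Circle1) : ℂ) = _
          rw [← hp, fX_mk]
          rfl
        rw [hval, ← hc]
      · have hpneg : (p.2 : ℂ) = -sCirc b ((p.2 : ℂ) ^ 2) :=
          (circle_branch b p.2).resolve_left hc
        have h2 : (F x).2 = qR (sigR p.1) := by rw [hFx2]; unfold g2; rw [if_neg hc]
        have : Finv0 (F x) = Quot.mk cobRel (sigR p.1, sEl (F x).1) := by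
          conv_lhs => rw [show F x = ((F x).1, (F x).2) from rfl, h2]
          rfl
        rw [this, ← hp]
        have hval : sEl (F x).1 = (⟨-(p.2 : ℂ),
            mem_sphere_zero_iff_norm.mpr (by rw [norm_neg, circle_norm])⟩ : Circle1) := by
          apply Subtype.ext
          show sCirc b (((F x).1 : Circle1) : ℂ) = -(p.2 : ℂ)
          have hval2 : (((F x).1 : Circle1) : ℂ) = (p.2 : ℂ) ^ 2 := by
            show ((fX x.1 : Circle1) : ℂ) = _
            rw [← hp, fX_mk]
            rfl
          rw [hval2]
          linear_combination hpneg
        rw [hval]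
        refine (Quot.sound ?_).symm
        exact Or.inr ⟨rfl, rfl⟩
    have hright : Function.RightInverse Finv F := by
      rintro ⟨w, y2⟩
      induction y2 using Quot.ind with
      | mk u =>
        refine Prod.ext ?_ ?_
        · apply Subtype.ext
          show fX (Quot.mk cobRel (u, sEl w)) = (w : Circle1)
          rw [fX_mk]
          exact Subtype.ext (hsEl_sq w)
        · show G (Quot.mk cobRel (u, sEl w)) = Quot.mk rR u
          show g2 b (u, sEl w) = Quot.mk rR u
          unfold g2
          rw [if_pos]
          · rfl
          · show ((sEl w : ℂ)) = sCirc b ((sEl w : ℂ) ^ 2)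
            rw [hsEl_sq w]
    refine ⟨{ toFun := F, invFun := Finv, left_inv := hleft, right_inv := hright,
              continuous_toFun := hFcont, continuous_invFun := hFinvcont }, fun x => rfl⟩
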